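/- Let v, γ > 0 and consider the classical symbol q(x,y,ξ,η) = yξ + vxη + (γ/2)(η² − y²) on ℝ⁴ (corresponding to the Kramers–Fokker–Planck operator with potential V(x) = −(v/2)x² at a saddle). Then the quadratic form φ₊(x,y) = (v/2)√(1+4v/γ²)·x² − (2v/γ)·xy + (1/2)√(1+4v/γ²)·y² is positive definite and satisfies the eiconal equation q(x, y, ∂ₓφ₊(x,y), ∂_yφ₊(x,y)) = 0 for all (x,y) ∈ ℝ², and it is the unique positive definite quadratic form with this property. -/

import Mathlib

lemma deriv_quad' (A B C x : ℝ) : deriv (fun t : ℝ => A * t ^ 2 + B * t + C) x = 2*A*x + B := by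
  have h : HasDerivAt (fun t : ℝ => A * t ^ 2 + B * t + C)
      (A * ((2:ℕ) * x ^ 1) + B * 1) x :=
    (((hasDerivAt_pow 2 x).const_mul A).add ((hasDerivAt_id x).const_mul B)).add_const C
  rw [h.deriv]; push_cast; ring



/-- the symbol `q(x,y,ξ,η) = yξ + vxη + (γ/2)(η² − y²)` -/
noncomputable def kfpSymbol (v γ x y ξ η : ℝ) : ℝ := y * ξ + v * x * η + γ/2 * (η^2 - y^2)

/-- The quadratic form
`φ₊(x,y) = (v/2)√(1+4v/γ²)x² − (2v/γ)xy + (1/2)√(1+4v/γ²)y²` is positive definite, solves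
the eiconal equation `q(x,y,∂ₓφ₊,∂_yφ₊) = 0`, and is the unique positive definite quadratic
form with this property. -/
theorem eiconal_unique_positive_solution (v γ : ℝ) (hv : 0 < v) (hγ : 0 < γ) :
    let s := Real.sqrt (1 + 4*v/γ^2)
    let φp : ℝ → ℝ → ℝ := fun x y => v/2 * s * x^2 - 2*v/γ * x * y + 1/2 * s * y^2
    (∀ x y : ℝ, (x, y) ≠ ((0 : ℝ), (0 : ℝ)) → 0 < φp x y) ∧
    (∀ x y : ℝ,
      kfpSymbol v γ x y (deriv (fun t => φp t y) x) (deriv (fun t => φp x t) y) = 0) ∧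
    (∀ a b c : ℝ,
      (∀ x y : ℝ, (x, y) ≠ ((0 : ℝ), (0 : ℝ)) → 0 < a/2 * x^2 + b * x * y + c/2 * y^2) →
      (∀ x y : ℝ,
        kfpSymbol v γ x y
          (deriv (fun t => a/2 * t^2 + b * t * y + c/2 * y^2) x)
          (deriv (fun t => a/2 * x^2 + b * x * t + c/2 * t^2) y) = 0) →
      ∀ x y : ℝ, a/2 * x^2 + b * x * y + c/2 * y^2 = φp x y) := by
  intro s φp
  have hγ' : γ ≠ 0 := ne_of_gt hγ
  have hs : 0 < s := Real.sqrt_pos.mpr (by positivity)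
  have hs2 : s^2 = 1 + 4*v/γ^2 := Real.sq_sqrt (by positivity)
  have hs2' : γ^2 * s^2 = γ^2 + 4*v := by rw [hs2]; field_simp
  -- positive definiteness
  have hpos : ∀ x y : ℝ, (x, y) ≠ ((0 : ℝ), (0 : ℝ)) → 0 < φp x y := by
    intro x y hxy
    show 0 < v/2 * s * x^2 - 2*v/γ * x * y + 1/2 * s * y^2
    have key : v * s^2 - (2*v/γ)^2 = v := by rw [hs2]; field_simp; ring
    by_cases hy : y = 0
    · have hx : x ≠ 0 := by
        intro hx; exact hxy (by simp [hx, hy])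
      subst hy
      have : 0 < x^2 := by positivity
      nlinarith [mul_pos (mul_pos hv hs) this]
    · have hy2 : 0 < y^2 := by positivity
      nlinarith [sq_nonneg (v*s*x - 2*v/γ*y), mul_pos hv hy2, mul_pos hv hs, key]
  refine ⟨hpos, ?_, ?_⟩
  · -- eiconal equation
    intro x y
    have hd1 : deriv (fun t => φp t y) x = v*s*x - 2*v/γ*y := by
      have : (fun t : ℝ => φp t y)
          = fun t : ℝ => (v/2*s) * t^2 + (-(2*v/γ)*y) * t + 1/2 * s * y^2 := by
        funext t; show v/2 * s * t^2 - 2*v/γ * t * y + 1/2 * s * y^2 = _; ring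
      rw [this, deriv_quad']; ring
    have hd2 : deriv (fun t => φp x t) y = -(2*v/γ)*x + s*y := by
      have : (fun t : ℝ => φp x t)
          = fun t : ℝ => (1/2*s) * t^2 + (-(2*v/γ)*x) * t + v/2*s*x^2 := by
        funext t; show v/2 * s * x^2 - 2*v/γ * x * t + 1/2 * s * t^2 = _; ring
      rw [this, deriv_quad']; ring
    rw [hd1, hd2]
    show y * (v*s*x - 2*v/γ*y) + v * x * (-(2*v/γ)*x + s*y)
        + γ/2 * ((-(2*v/γ)*x + s*y)^2 - y^2) = 0
    field_simp
    linear_combination y^2 * hs2'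
  · -- uniqueness
    intro a b c hposq heq
    have E : ∀ x y : ℝ, y * (a*x + b*y) + v * x * (b*x + c*y)
        + γ/2 * ((b*x + c*y)^2 - y^2) = 0 := by
      intro x y
      have h := heq x y
      have hd1 : deriv (fun t => a/2 * t^2 + b * t * y + c/2 * y^2) x = a*x + b*y := by
        have : (fun t : ℝ => a/2 * t^2 + b * t * y + c/2 * y^2)
            = fun t : ℝ => (a/2) * t^2 + (b*y) * t + c/2*y^2 := by funext t; ring
        rw [this, deriv_quad']; ring
      have hd2 : deriv (fun t => a/2 * x^2 + b * x * t + c/2 * t^2) y = b*x + c*y := by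
        have : (fun t : ℝ => a/2 * x^2 + b * x * t + c/2 * t^2)
            = fun t : ℝ => (c/2) * t^2 + (b*x) * t + a/2*x^2 := by funext t; ring
        rw [this, deriv_quad']; ring
      rw [hd1, hd2] at h
      simpa [kfpSymbol] using h
    have e1 : v*b + γ/2 * b^2 = 0 := by have := E 1 0; linarith [E 1 0]; 
    have e2 : b + γ/2 * (c^2 - 1) = 0 := by have := E 0 1; nlinarith [E 0 1]
    have e3 : a + v*c + γ*b*c = 0 := by nlinarith [E 1 1, e1, e2]
    have ha : 0 < a := by have := hposq 1 0 (by simp); nlinarith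
    have hc : 0 < c := by have := hposq 0 1 (by simp); nlinarith
    have hb : b = -(2*v/γ) := by
      rcases mul_eq_zero.mp (show b * (v + γ/2 * b) = 0 by nlinarith [e1]) with h | h
      · exfalso
        subst h
        have hc1 : c = 1 := by nlinarith [e2, hc]
        rw [hc1] at e3
        nlinarith
      · field_simp
        linarith
    have hc2 : c^2 = s^2 := by
      rw [hb] at e2
      field_simp at e2
      have h4 : γ^2 * c^2 = γ^2 * s^2 := by rw [hs2']; linarith
      exact mul_left_cancel₀ (by positivity) h4
    have hcs : c = s := by
      have h5 : (c - s) * (c + s) = 0 := by linear_combination hc2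
      rcases mul_eq_zero.mp h5 with h | h
      · linarith
      · exfalso; linarith
    have ha2 : a = v * s := by
      rw [hb, hcs] at e3
      field_simp at e3
      have h6 : γ * (a - v*s) = 0 := by linear_combination γ * e3
      have h7 := (mul_eq_zero.mp h6).resolve_left hγ'
      linarith
    intro x y
    show _ = v/2 * s * x^2 - 2*v/γ * x * y + 1/2 * s * y^2
    rw [hb, hcs, ha2]; ring
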